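/- arXiv:2410.22146 — 11 statements merged into one kernel-verified Lean document; each statement's English description precedes it below -/
import Mathlib

section
/- Let e denote Euler's number and set σ₁ := (e−1)/(e+1), σ₂ := (e+1)/(e−1). Suppose σ ∈ ℝ and Φ : ℝ → ℝ is twice differentiable with Φ''(x) = Φ(x) for all x ∈ [0,1], −Φ'(0) = σ·Φ(0), Φ'(1) = σ·Φ(1), and Φ is not identically zero on [0,1]. Then σ = σ₁ or σ = σ₂. -/
/-- Any nontrivial solution of the Steklov eigenvalue problem on (0,1)
has eigenvalue σ₁ = (e-1)/(e+1) or σ₂ = (e+1)/(e-1). -/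
theorem steklov_eigenvalues (σ : ℝ) (Φ : ℝ → ℝ)
    (hΦ : Differentiable ℝ Φ) (hΦ' : Differentiable ℝ (deriv Φ))
    (hODE : ∀ x ∈ Set.Icc (0:ℝ) 1, deriv (deriv Φ) x = Φ x)
    (hbc0 : -(deriv Φ 0) = σ * Φ 0)
    (hbc1 : deriv Φ 1 = σ * Φ 1)
    (hne : ∃ x ∈ Set.Icc (0:ℝ) 1, Φ x ≠ 0) :
    σ = (Real.exp 1 - 1) / (Real.exp 1 + 1) ∨
    σ = (Real.exp 1 + 1) / (Real.exp 1 - 1) := by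
  have E1 : (1:ℝ) < Real.exp 1 := by
    have := Real.add_one_lt_exp (by norm_num : (1:ℝ) ≠ 0)
    linarith
  -- f := (Φ - Φ') * exp is constant on [0,1]
  have hf : ∀ y ∈ Set.Icc (0:ℝ) 1,
      (Φ y - deriv Φ y) * Real.exp y = (Φ 0 - deriv Φ 0) * Real.exp 0 := by
    apply constant_of_has_deriv_right_zero
    · exact ((hΦ.sub hΦ').continuous.mul Real.continuous_exp).continuousOn
    · intro x hx
      have h1 : HasDerivAt Φ (deriv Φ x) x := (hΦ x).hasDerivAt
      have h2 : HasDerivAt (deriv Φ) (deriv (deriv Φ) x) x := (hΦ' x).hasDerivAt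
      have hd := (h1.sub h2).mul (Real.hasDerivAt_exp x)
      have hz : (deriv Φ x - deriv (deriv Φ) x) * Real.exp x
          + (Φ x - deriv Φ x) * Real.exp x = 0 := by
        rw [hODE x ⟨hx.1, hx.2.le⟩]; ring
      rw [Pi.sub_apply, hz] at hd
      exact hd.hasDerivWithinAt
  -- g := (Φ + Φ') * exp(-·) is constant on [0,1]
  have hg : ∀ y ∈ Set.Icc (0:ℝ) 1,
      (Φ y + deriv Φ y) * Real.exp (-y) = (Φ 0 + deriv Φ 0) * Real.exp (-0) := by
    apply constant_of_has_deriv_right_zero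
    · exact ((hΦ.add hΦ').continuous.mul
        (Real.continuous_exp.comp continuous_neg)).continuousOn
    · intro x hx
      have h1 : HasDerivAt Φ (deriv Φ x) x := (hΦ x).hasDerivAt
      have h2 : HasDerivAt (deriv Φ) (deriv (deriv Φ) x) x := (hΦ' x).hasDerivAt
      have he : HasDerivAt (fun y : ℝ => Real.exp (-y)) (Real.exp (-x) * (-1)) x :=
        (Real.hasDerivAt_exp (-x)).comp x (hasDerivAt_neg x)
      have hd := (h1.add h2).mul he
      have hz : (deriv Φ x + deriv (deriv Φ) x) * Real.exp (-x)
          + (Φ x + deriv Φ x) * (Real.exp (-x) * (-1)) = 0 := by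
        rw [hODE x ⟨hx.1, hx.2.le⟩]; ring
      rw [Pi.add_apply, hz] at hd
      exact hd.hasDerivWithinAt
  have hΦ0 : Φ 0 ≠ 0 := by
    intro h0
    have hd0 : deriv Φ 0 = 0 := by
      rw [h0, mul_zero] at hbc0; linarith
    obtain ⟨x, hx, hxne⟩ := hne
    have h1 := hf x hx
    have h2 := hg x hx
    rw [h0, hd0, sub_zero, zero_mul] at h1
    rw [h0, hd0, add_zero, zero_mul] at h2
    have hex : Real.exp x ≠ 0 := (Real.exp_pos x).ne'
    have hex' : Real.exp (-x) ≠ 0 := (Real.exp_pos (-x)).ne'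
    have ha : Φ x - deriv Φ x = 0 := by
      rcases mul_eq_zero.mp h1 with h | h
      · exact h
      · exact absurd h hex
    have hb : Φ x + deriv Φ x = 0 := by
      rcases mul_eq_zero.mp h2 with h | h
      · exact h
      · exact absurd h hex'
    exact hxne (by linarith)
  have e1 := hf 1 ⟨by norm_num, le_refl 1⟩
  have e2 := hg 1 ⟨by norm_num, le_refl 1⟩
  rw [Real.exp_zero] at e1
  simp only [neg_zero, Real.exp_zero] at e2
  rw [hbc1] at e1 e2
  have hd0 : deriv Φ 0 = -(σ * Φ 0) := by linarith
  rw [hd0] at e1 e2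
  have hinv : Real.exp (-1 : ℝ) = (Real.exp 1)⁻¹ := by
    rw [Real.exp_neg]
  rw [hinv] at e2
  set E := Real.exp 1 with hE
  have hEpos : (0:ℝ) < E := Real.exp_pos 1
  have hEne : E ≠ 0 := hEpos.ne'
  -- e1 : (Φ 1 - σ * Φ 1) * E = Φ 0 - -(σ * Φ 0)
  -- e2 : (Φ 1 + σ * Φ 1) * E⁻¹ = Φ 0 + -(σ * Φ 0)
  have e2' : Φ 1 + σ * Φ 1 = (Φ 0 - σ * Φ 0) * E := by
    field_simp at e2
    linarith
  have key : (1 + σ)^2 = (1 - σ)^2 * E^2 := by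
    have hz : ((1 + σ)^2 - (1 - σ)^2 * E^2) * Φ 0 = 0 := by
      linear_combination (-(1+σ)) * e1 + ((1-σ)*E) * e2'
    rcases mul_eq_zero.mp hz with h | h
    · linarith
    · exact absurd h hΦ0
  have hfac : (1 + σ - E * (1 - σ)) * (1 + σ + E * (1 - σ)) = 0 := by nlinarith [key]
  rcases mul_eq_zero.mp hfac with h | h
  · left
    have : σ * (E + 1) = E - 1 := by linarith
    field_simp
    linarith
  · right
    have : σ * (E - 1) = E + 1 := by nlinarith
    have hE1 : E - 1 ≠ 0 := by linarith
    field_simp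
    linarith
end

section
/- Let e denote Euler's number, σ₁ := (e−1)/(e+1), g : ℝ → ℝ, λ ∈ ℝ, and c ∈ ℝ with c ≠ 0. Define u(x) := c·(eˣ + e^{1−x}). Then u satisfies u''(x) = u(x) for all x ∈ [0,1], and u satisfies the nonlinear boundary conditions −u'(0) = λ·u(0) + g(u(0)) and u'(1) = λ·u(1) + g(u(1)) if and only if λ = σ₁ − g((1+e)·c)/((1+e)·c). -/
lemma exp_one_sub_hasDerivAt (x : ℝ) :
    HasDerivAt (fun x : ℝ => Real.exp (1 - x)) (-Real.exp (1 - x)) x := by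
  have h := (Real.hasDerivAt_exp (1 - x)).comp x
    (((hasDerivAt_id x).const_sub 1))
  simpa [Function.comp_def] using h

/-- The functions u(x) = c(e^x + e^(1-x)) solve u'' = u, and satisfy the
nonlinear boundary conditions iff λ = σ₁ - g((1+e)c)/((1+e)c). -/
theorem first_branch_equilibria (g : ℝ → ℝ) (lam c : ℝ) (hc : c ≠ 0)
    (u : ℝ → ℝ) (hu : u = fun x => c * (Real.exp x + Real.exp (1 - x))) :
    (∀ x ∈ Set.Icc (0:ℝ) 1, deriv (deriv u) x = u x) ∧
    ((-(deriv u 0) = lam * u 0 + g (u 0) ∧ deriv u 1 = lam * u 1 + g (u 1)) ↔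
      lam = (Real.exp 1 - 1) / (Real.exp 1 + 1)
        - g ((1 + Real.exp 1) * c) / ((1 + Real.exp 1) * c)) := by
  have hd : deriv u = fun x => c * (Real.exp x - Real.exp (1 - x)) := by
    funext x
    rw [hu]
    have h : HasDerivAt (fun x : ℝ => c * (Real.exp x + Real.exp (1 - x)))
        (c * (Real.exp x - Real.exp (1 - x))) x := by
      have := ((Real.hasDerivAt_exp x).add (exp_one_sub_hasDerivAt x)).const_mul c
      simpa [sub_eq_add_neg] using this
    exact h.deriv
  have hdd : deriv (deriv u) = fun x => c * (Real.exp x + Real.exp (1 - x)) := by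
    rw [hd]
    funext x
    have h : HasDerivAt (fun x : ℝ => c * (Real.exp x - Real.exp (1 - x)))
        (c * (Real.exp x + Real.exp (1 - x))) x := by
      have := ((Real.hasDerivAt_exp x).sub (exp_one_sub_hasDerivAt x)).const_mul c
      simpa [sub_neg_eq_add] using this
    exact h.deriv
  constructor
  · intro x _
    rw [hdd, hu]
  · have hE : (0:ℝ) < Real.exp 1 := Real.exp_pos 1
    have hE1 : (1 + Real.exp 1) ≠ 0 := by positivity
    have hEc : (1 + Real.exp 1) * c ≠ 0 := mul_ne_zero hE1 hc
    rw [hd, hu]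
    simp only [Real.exp_zero, sub_zero, sub_self]
    have hu0 : c * (1 + Real.exp 1) = (1 + Real.exp 1) * c := by ring
    constructor
    · rintro ⟨h1, _⟩
      rw [hu0] at h1
      have hl : lam = (-(c * (1 - Real.exp 1)) - g ((1 + Real.exp 1) * c)) /
          ((1 + Real.exp 1) * c) := by
        field_simp
        rw [hu0]
        linarith
      rw [hl]
      field_simp
      ring
    · intro hlam
      subst hlam
      rw [hu0]
      constructor <;> field_simp <;> ring
end

section
/- Let e denote Euler's number, σ₂ := (e+1)/(e−1), g : ℝ → ℝ an odd function (g(−s) = −g(s) for all s), λ ∈ ℝ, and c ∈ ℝ with c ≠ 0. Define u(x) := c·(eˣ − e^{1−x}). Then u satisfies u''(x) = u(x) for all x ∈ [0,1], and u satisfies the nonlinear boundary conditions −u'(0) = λ·u(0) + g(u(0)) and u'(1) = λ·u(1) + g(u(1)) if and only if λ = σ₂ − g((e−1)·c)/((e−1)·c). -/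
lemma sb_deriv_aux (c : ℝ) (x : ℝ) :
    HasDerivAt (fun x => c * (Real.exp x - Real.exp (1 - x)))
      (c * (Real.exp x + Real.exp (1 - x))) x := by
  have h1 : HasDerivAt (fun x : ℝ => Real.exp (1 - x)) (-Real.exp (1 - x)) x := by
    have := (Real.hasDerivAt_exp (1 - x)).comp x
      (((hasDerivAt_id x).const_sub 1))
    simpa [Function.comp_def] using this
  have := ((Real.hasDerivAt_exp x).sub h1).const_mul c
  simpa [mul_add, sub_neg_eq_add] using this

lemma sb_deriv_aux2 (c : ℝ) (x : ℝ) :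
    HasDerivAt (fun x => c * (Real.exp x + Real.exp (1 - x)))
      (c * (Real.exp x - Real.exp (1 - x))) x := by
  have h1 : HasDerivAt (fun x : ℝ => Real.exp (1 - x)) (-Real.exp (1 - x)) x := by
    have := (Real.hasDerivAt_exp (1 - x)).comp x
      (((hasDerivAt_id x).const_sub 1))
    simpa [Function.comp_def] using this
  have := ((Real.hasDerivAt_exp x).add h1).const_mul c
  simpa [mul_sub, sub_eq_add_neg] using this

/-- For odd g, the functions u(x) = c(e^x - e^(1-x)) solve u'' = u, and satisfy the
nonlinear boundary conditions iff λ = σ₂ - g((e-1)c)/((e-1)c). -/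
theorem second_branch_equilibria (g : ℝ → ℝ) (hodd : ∀ s : ℝ, g (-s) = -g s)
    (lam c : ℝ) (hc : c ≠ 0)
    (u : ℝ → ℝ) (hu : u = fun x => c * (Real.exp x - Real.exp (1 - x))) :
    (∀ x ∈ Set.Icc (0:ℝ) 1, deriv (deriv u) x = u x) ∧
    ((-(deriv u 0) = lam * u 0 + g (u 0) ∧ deriv u 1 = lam * u 1 + g (u 1)) ↔
      lam = (Real.exp 1 + 1) / (Real.exp 1 - 1)
        - g ((Real.exp 1 - 1) * c) / ((Real.exp 1 - 1) * c)) := by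
  subst hu
  have hd : deriv (fun x => c * (Real.exp x - Real.exp (1 - x)))
      = fun x => c * (Real.exp x + Real.exp (1 - x)) := by
    funext x; exact (sb_deriv_aux c x).deriv
  have hd2 : ∀ x, deriv (deriv (fun x => c * (Real.exp x - Real.exp (1 - x)))) x
      = c * (Real.exp x - Real.exp (1 - x)) := by
    intro x; rw [hd]; exact (sb_deriv_aux2 c x).deriv
  refine ⟨fun x _ => hd2 x, ?_⟩
  rw [hd]
  have he : Real.exp 1 > 1 := by
    have := Real.add_one_lt_exp (by norm_num : (1:ℝ) ≠ 0); linarith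
  have hne : Real.exp 1 - 1 ≠ 0 := by linarith
  have h0 : c * (Real.exp 0 - Real.exp (1 - 0)) = -((Real.exp 1 - 1) * c) := by
    simp [Real.exp_zero]; ring
  have h1 : c * (Real.exp 1 - Real.exp (1 - 1)) = (Real.exp 1 - 1) * c := by
    simp [Real.exp_zero]; ring
  have hg0 : g (c * (Real.exp 0 - Real.exp (1 - 0))) = -g ((Real.exp 1 - 1) * c) := by
    rw [h0, hodd]
  have hg1 : g (c * (Real.exp 1 - Real.exp (1 - 1))) = g ((Real.exp 1 - 1) * c) := by
    rw [h1]
  simp only [h0, h1, hodd]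
  have hmc : (Real.exp 1 - 1) * c ≠ 0 := mul_ne_zero hne hc
  have hd0 : c * (Real.exp 0 + Real.exp (1 - 0)) = (Real.exp 1 + 1) * c := by
    simp [Real.exp_zero]; ring
  have hd1 : c * (Real.exp 1 + Real.exp (1 - 1)) = (Real.exp 1 + 1) * c := by
    simp [Real.exp_zero]; ring
  simp only [hd0, hd1]
  generalize hGen : g ((Real.exp 1 - 1) * c) = G
  constructor
  · rintro ⟨hA, -⟩
    have key : lam * ((Real.exp 1 - 1) * c) = (Real.exp 1 + 1) * c - G := by linarith
    field_simp
    linear_combination key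
  · intro hlam
    subst hlam
    constructor
    · field_simp
      ring
    · field_simp
      ring
end

section
/- Let λ ∈ ℝ, let μ > −1, and set s := √(1+μ) > 0 (allowing also s = 0 when μ = −1 is excluded, so s > 0). There exists a function φ : ℝ → ℝ, not identically zero on [0,1], twice differentiable with φ''(x) = (1+μ)·φ(x) for all x ∈ [0,1] and satisfying −φ'(0) = (λ+1)·φ(0) and φ'(1) = (λ+1)·φ(1), if and only if e^{2s}·(s − (λ+1))² = (s + (λ+1))². -/
private lemma exp_mul_hasDerivAt (s x : ℝ) :
    HasDerivAt (fun x => Real.exp (s * x)) (s * Real.exp (s * x)) x := by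
  have h : HasDerivAt (fun x : ℝ => s * x) s x := by
    simpa using (hasDerivAt_id x).const_mul s
  simpa [mul_comm] using h.exp

private lemma exp_neg_mul_hasDerivAt (s x : ℝ) :
    HasDerivAt (fun x => Real.exp (-(s * x))) (-s * Real.exp (-(s * x))) x := by
  have h : HasDerivAt (fun x : ℝ => -(s * x)) (-s) x := by
    simpa using ((hasDerivAt_id x).const_mul s).fun_neg
  simpa [mul_comm] using h.exp

private lemma comb_hasDerivAt (a b s x : ℝ) :
    HasDerivAt (fun x => a * Real.exp (s * x) + b * Real.exp (-(s * x)))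
      (s * a * Real.exp (s * x) + (-(s * b)) * Real.exp (-(s * x))) x := by
  have h := ((exp_mul_hasDerivAt s x).const_mul a).fun_add
    ((exp_neg_mul_hasDerivAt s x).const_mul b)
  exact h.congr_deriv (by ring)

/-- For μ > -1 and s = √(1+μ), the linearization at the trivial equilibrium has
eigenvalue μ iff e^(2s)(s-(λ+1))² = (s+(λ+1))². -/
theorem eigenvalue_characterization_above (lam μ : ℝ) (hμ : -1 < μ) :
    (∃ φ : ℝ → ℝ, (∃ x ∈ Set.Icc (0:ℝ) 1, φ x ≠ 0) ∧
      Differentiable ℝ φ ∧ Differentiable ℝ (deriv φ) ∧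
      (∀ x ∈ Set.Icc (0:ℝ) 1, deriv (deriv φ) x = (1 + μ) * φ x) ∧
      -(deriv φ 0) = (lam + 1) * φ 0 ∧
      deriv φ 1 = (lam + 1) * φ 1) ↔
    Real.exp (2 * Real.sqrt (1 + μ)) * (Real.sqrt (1 + μ) - (lam + 1)) ^ 2
      = (Real.sqrt (1 + μ) + (lam + 1)) ^ 2 := by
  have h1μ : (0:ℝ) < 1 + μ := by linarith
  set s := Real.sqrt (1 + μ) with hs_def
  have hs : 0 < s := Real.sqrt_pos.2 h1μ
  have hs2 : s ^ 2 = 1 + μ := Real.sq_sqrt h1μ.le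
  set L := lam + 1 with hLdef
  have h2s : Real.exp (2 * s) = Real.exp s * Real.exp s := by
    rw [two_mul, Real.exp_add]
  have hEE : Real.exp s * Real.exp (-s) = 1 := by
    rw [← Real.exp_add]; simp
  constructor
  · rintro ⟨φ, ⟨x₀, hx₀, hφx₀⟩, hφ, hφ', hode, hbc0, hbc1⟩
    have hφat : ∀ x, HasDerivAt φ (deriv φ x) x := fun x => (hφ x).hasDerivAt
    have hφ'at : ∀ x, HasDerivAt (deriv φ) (deriv (deriv φ) x) x :=
      fun x => (hφ' x).hasDerivAt
    have hode' : ∀ x ∈ Set.Icc (0:ℝ) 1, deriv (deriv φ) x = s ^ 2 * φ x := by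
      intro x hx; rw [hode x hx, hs2]
    -- A x = (φ' + s φ) e^{-sx} is constant on [0,1]
    have hAconst : ∀ x ∈ Set.Icc (0:ℝ) 1,
        (deriv φ x + s * φ x) * Real.exp (-(s * x))
          = (deriv φ 0 + s * φ 0) * Real.exp (-(s * 0)) := by
      apply constant_of_has_deriv_right_zero
        (f := fun x => (deriv φ x + s * φ x) * Real.exp (-(s * x)))
      · exact (((hφ'.continuous).add (continuous_const.mul hφ.continuous)).mul
          (Real.continuous_exp.comp ((continuous_const.mul continuous_id).neg))).continuousOn
      · intro x hx
        have hd : HasDerivAt (fun x => (deriv φ x + s * φ x) * Real.exp (-(s * x)))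
            ((deriv (deriv φ) x + s * deriv φ x) * Real.exp (-(s * x))
              + (deriv φ x + s * φ x) * (-s * Real.exp (-(s * x)))) x :=
          ((hφ'at x).add ((hφat x).const_mul s)).mul (exp_neg_mul_hasDerivAt s x)
        have hval : (deriv (deriv φ) x + s * deriv φ x) * Real.exp (-(s * x))
              + (deriv φ x + s * φ x) * (-s * Real.exp (-(s * x))) = 0 := by
          rw [hode' x (Set.Ico_subset_Icc_self hx)]; ring
        rw [hval] at hd
        exact hd.hasDerivWithinAt
    -- B x = (φ' - s φ) e^{sx} is constant on [0,1]
    have hBconst : ∀ x ∈ Set.Icc (0:ℝ) 1,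
        (deriv φ x - s * φ x) * Real.exp (s * x)
          = (deriv φ 0 - s * φ 0) * Real.exp (s * 0) := by
      apply constant_of_has_deriv_right_zero
        (f := fun x => (deriv φ x - s * φ x) * Real.exp (s * x))
      · exact (((hφ'.continuous).sub (continuous_const.mul hφ.continuous)).mul
          (Real.continuous_exp.comp (continuous_const.mul continuous_id))).continuousOn
      · intro x hx
        have hd : HasDerivAt (fun x => (deriv φ x - s * φ x) * Real.exp (s * x))
            ((deriv (deriv φ) x - s * deriv φ x) * Real.exp (s * x)
              + (deriv φ x - s * φ x) * (s * Real.exp (s * x))) x :=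
          ((hφ'at x).sub ((hφat x).const_mul s)).mul (exp_mul_hasDerivAt s x)
        have hval : (deriv (deriv φ) x - s * deriv φ x) * Real.exp (s * x)
              + (deriv φ x - s * φ x) * (s * Real.exp (s * x)) = 0 := by
          rw [hode' x (Set.Ico_subset_Icc_self hx)]; ring
        rw [hval] at hd
        exact hd.hasDerivWithinAt
    have hd0 : deriv φ 0 = -(L * φ 0) := by linarith
    -- φ 0 ≠ 0
    have hu : φ 0 ≠ 0 := by
      intro hu0
      have hA0 : (deriv φ 0 + s * φ 0) * Real.exp (-(s * 0)) = 0 := by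
        rw [hd0, hu0]; ring
      have hB0 : (deriv φ 0 - s * φ 0) * Real.exp (s * 0) = 0 := by
        rw [hd0, hu0]; ring
      have hA := (hAconst x₀ hx₀).trans hA0
      have hB := (hBconst x₀ hx₀).trans hB0
      have hA' : deriv φ x₀ + s * φ x₀ = 0 :=
        (mul_eq_zero.1 hA).resolve_right (Real.exp_ne_zero _)
      have hB' : deriv φ x₀ - s * φ x₀ = 0 :=
        (mul_eq_zero.1 hB).resolve_right (Real.exp_ne_zero _)
      have : φ x₀ = 0 := by
        have h2 : 2 * s * φ x₀ = 0 := by linarith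
        have := mul_eq_zero.1 h2
        rcases this with h | h
        · exact absurd h (by positivity)
        · exact h
      exact hφx₀ this
    have hmem1 : (1:ℝ) ∈ Set.Icc (0:ℝ) 1 := by constructor <;> norm_num
    have e1 : (L * φ 1 + s * φ 1) * Real.exp (-s) = -(L * φ 0) + s * φ 0 := by
      have h := hAconst 1 hmem1
      rw [hbc1, hd0] at h
      simpa using h
    have e2 : (L * φ 1 - s * φ 1) * Real.exp s = -(L * φ 0) - s * φ 0 := by
      have h := hBconst 1 hmem1
      rw [hbc1, hd0] at h
      simpa using h
    have e1' : (L + s) * φ 1 = (s - L) * φ 0 * Real.exp s := by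
      linear_combination Real.exp s * e1 - (L * φ 1 + s * φ 1) * hEE
    have key : Real.exp s * Real.exp s * (s - L) ^ 2 * φ 0 = (s + L) ^ 2 * φ 0 := by
      linear_combination ((L - s) * Real.exp s) * e1' - (L + s) * e2
    rw [h2s]
    exact mul_right_cancel₀ hu (by linear_combination key)
  · intro h
    set φ : ℝ → ℝ := fun x => (s - L) * Real.exp (s * x) + (s + L) * Real.exp (-(s * x))
      with hφdef
    set ψ : ℝ → ℝ := fun x =>
      s * (s - L) * Real.exp (s * x) + (-(s * (s + L))) * Real.exp (-(s * x)) with hψdef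
    have hφat : ∀ x, HasDerivAt φ (ψ x) x := fun x => comb_hasDerivAt _ _ s x
    have hψat : ∀ x, HasDerivAt ψ
        (s * (s * (s - L)) * Real.exp (s * x)
          + (-(s * (-(s * (s + L))))) * Real.exp (-(s * x))) x :=
      fun x => comb_hasDerivAt _ _ s x
    have hdφ : deriv φ = ψ := funext fun x => (hφat x).deriv
    have hdψ : ∀ x, deriv ψ x = s * (s * (s - L)) * Real.exp (s * x)
          + (-(s * (-(s * (s + L))))) * Real.exp (-(s * x)) := fun x => (hψat x).deriv
    refine ⟨φ, ⟨0, by constructor <;> norm_num, ?_⟩, fun x => (hφat x).differentiableAt,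
      ?_, ?_, ?_, ?_⟩
    · show (s - L) * Real.exp (s * 0) + (s + L) * Real.exp (-(s * 0)) ≠ 0
      simp only [mul_zero, neg_zero, Real.exp_zero, mul_one]
      intro hc
      have : s = 0 := by linarith
      exact absurd this (ne_of_gt hs)
    · rw [hdφ]; exact fun x => (hψat x).differentiableAt
    · intro x _
      rw [hdφ, hdψ x, ← hs2]
      show _ = s ^ 2 * ((s - L) * Real.exp (s * x) + (s + L) * Real.exp (-(s * x)))
      ring
    · rw [hdφ]
      show -(s * (s - L) * Real.exp (s * 0) + (-(s * (s + L))) * Real.exp (-(s * 0)))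
        = L * ((s - L) * Real.exp (s * 0) + (s + L) * Real.exp (-(s * 0)))
      simp only [mul_zero, neg_zero, Real.exp_zero, mul_one]
      ring
    · rw [hdφ]
      simp only [hψdef, hφdef, mul_one]
      rw [h2s] at h
      linear_combination Real.exp (-s) * h - (s - L) ^ 2 * Real.exp s * hEE
end

section
/- Let λ < −1 and μ ≥ −1. Then there is no function φ : ℝ → ℝ, not identically zero on [0,1], twice differentiable with φ''(x) = (1+μ)·φ(x) for all x ∈ [0,1] and satisfying −φ'(0) = (λ+1)·φ(0) and φ'(1) = (λ+1)·φ(1). In particular, for λ < −1 the linearization at the trivial equilibrium has no eigenvalue μ ≥ −1, so all eigenvalues are strictly less than −1 and the trivial equilibrium is asymptotically stable. -/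
/-- For λ < -1 the linearization at the trivial equilibrium has no eigenvalue μ ≥ -1. -/
theorem no_eigenvalue_above_for_lambda_below (lam μ : ℝ) (hlam : lam < -1) (hμ : -1 ≤ μ) :
    ¬ ∃ φ : ℝ → ℝ, (∃ x ∈ Set.Icc (0:ℝ) 1, φ x ≠ 0) ∧
      Differentiable ℝ φ ∧ Differentiable ℝ (deriv φ) ∧
      (∀ x ∈ Set.Icc (0:ℝ) 1, deriv (deriv φ) x = (1 + μ) * φ x) ∧
      -(deriv φ 0) = (lam + 1) * φ 0 ∧
      deriv φ 1 = (lam + 1) * φ 1 := by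
  rintro ⟨φ, ⟨x₀, hx₀, hx₀ne⟩, hφ, hφ', hode, hb0, hb1⟩
  set c := 1 + μ with hc
  have hc0 : 0 ≤ c := by linarith
  have hl : lam + 1 < 0 := by linarith
  set h : ℝ → ℝ := fun x => φ x * deriv φ x with hh
  have hhdiff : Differentiable ℝ h := hφ.mul hφ'
  have hderivh : ∀ x ∈ Set.Icc (0:ℝ) 1,
      deriv h x = (deriv φ x) ^ 2 + c * (φ x) ^ 2 := by
    intro x hx
    have : deriv h x = deriv φ x * deriv φ x + φ x * deriv (deriv φ) x := by
      simpa using deriv_fun_mul (hφ x) (hφ' x)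
    rw [this, hode x hx]; ring
  -- h is monotone on [0,1]
  have hmono : MonotoneOn h (Set.Icc (0:ℝ) 1) := by
    apply monotoneOn_of_deriv_nonneg (convex_Icc 0 1) hhdiff.continuous.continuousOn
      hhdiff.differentiableOn
    intro x hx
    rw [interior_Icc] at hx
    rw [hderivh x (Set.mem_Icc_of_Ioo hx)]
    positivity
  have h01 : h 0 ≤ h 1 := hmono (by norm_num) (by norm_num) (by norm_num)
  have hh0 : h 0 = -(lam + 1) * φ 0 ^ 2 := by
    have : deriv φ 0 = -((lam + 1) * φ 0) := by linarith [hb0]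
    simp [hh, this]; ring
  have hh1 : h 1 = (lam + 1) * φ 1 ^ 2 := by simp [hh, hb1]; ring
  -- boundary values vanish
  have hsum : φ 0 ^ 2 + φ 1 ^ 2 ≤ 0 := by
    nlinarith [h01, hh0, hh1, sq_nonneg (φ 0), sq_nonneg (φ 1)]
  have hφ0 : φ 0 = 0 := by
    have : φ 0 ^ 2 = 0 := by nlinarith [sq_nonneg (φ 0), sq_nonneg (φ 1)]
    exact pow_eq_zero_iff (n := 2) (by norm_num) |>.mp this
  have hφ1 : φ 1 = 0 := by
    have : φ 1 ^ 2 = 0 := by nlinarith [sq_nonneg (φ 0), sq_nonneg (φ 1)]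
    exact pow_eq_zero_iff (n := 2) (by norm_num) |>.mp this
  have hh0' : h 0 = 0 := by rw [hh0, hφ0]; ring
  have hh1' : h 1 = 0 := by rw [hh1, hφ1]; ring
  -- h ≡ 0 on [0,1]
  have hzero : ∀ x ∈ Set.Icc (0:ℝ) 1, h x = 0 := by
    intro x hx
    have h1 := hmono (by norm_num) hx hx.1
    have h2 := hmono hx (by norm_num) hx.2
    rw [hh0'] at h1; rw [hh1'] at h2; linarith
  -- deriv φ = 0 on (0,1)
  have hd0 : ∀ x ∈ Set.Ioo (0:ℝ) 1, deriv φ x = 0 := by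
    intro x hx
    have hev : h =ᶠ[nhds x] (fun _ => (0:ℝ)) := by
      filter_upwards [Ioo_mem_nhds hx.1 hx.2] with y hy
      exact hzero y (Set.mem_Icc_of_Ioo hy)
    have : deriv h x = 0 := by rw [hev.deriv_eq]; simp
    rw [hderivh x (Set.mem_Icc_of_Ioo hx)] at this
    nlinarith [sq_nonneg (deriv φ x), sq_nonneg (φ x), mul_nonneg hc0 (sq_nonneg (φ x))]
  have hd00 : deriv φ 0 = 0 := by rw [show deriv φ 0 = -((lam+1)*φ 0) by linarith [hb0], hφ0]; ring
  -- φ constant on [0,1]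
  have hconst : ∀ x ∈ Set.Icc (0:ℝ) 1, φ x = φ 0 := by
    apply constant_of_derivWithin_zero hφ.differentiableOn
    intro x hx
    rw [(hφ x).derivWithin ((uniqueDiffOn_Icc one_pos) x ⟨hx.1, hx.2.le⟩)]
    rcases eq_or_lt_of_le hx.1 with h | h
    · rw [← h]; exact hd00
    · exact hd0 x ⟨h, hx.2⟩
  exact hx₀ne (by rw [hconst x₀ hx₀, hφ0])
end

section
/- For every λ > −1 there exists s > λ+1 with s > 0 such that e^{2s}·(s − (λ+1))² = (s + (λ+1))². Consequently, there exists μ := s² − 1 > (λ+1)² − 1 and a function φ, not identically zero on [0,1], twice differentiable with φ'' = (1+μ)φ on [0,1], −φ'(0) = (λ+1)φ(0) and φ'(1) = (λ+1)φ(1). -/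
private lemma hasDerivAt_aux (c k : ℝ) (x : ℝ) :
    HasDerivAt (fun x => c * Real.exp (k * x)) (c * k * Real.exp (k * x)) x := by
  have h : HasDerivAt (fun x : ℝ => k * x) k x := by
    simpa using (hasDerivAt_id x).const_mul k
  have := (h.exp).const_mul c
  exact this.congr_deriv (by ring)

/-- For every λ > -1 there is s > λ+1 with e^(2s)(s-(λ+1))² = (s+(λ+1))²,
yielding an eigenvalue μ = s² - 1 > (λ+1)² - 1 of the linearization at the
trivial equilibrium. -/
theorem first_eigenvalue_exists (lam : ℝ) (hlam : -1 < lam) :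
    ∃ s : ℝ, lam + 1 < s ∧ 0 < s ∧
      Real.exp (2 * s) * (s - (lam + 1)) ^ 2 = (s + (lam + 1)) ^ 2 ∧
      (lam + 1) ^ 2 - 1 < s ^ 2 - 1 ∧
      ∃ φ : ℝ → ℝ, (∃ x ∈ Set.Icc (0:ℝ) 1, φ x ≠ 0) ∧
        Differentiable ℝ φ ∧ Differentiable ℝ (deriv φ) ∧
        (∀ x ∈ Set.Icc (0:ℝ) 1, deriv (deriv φ) x = (1 + (s ^ 2 - 1)) * φ x) ∧
        -(deriv φ 0) = (lam + 1) * φ 0 ∧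
        deriv φ 1 = (lam + 1) * φ 1 := by
  set a := lam + 1 with ha
  have ha0 : 0 < a := by linarith
  -- find s ∈ (a, a+2] with exp s * (s - a) = s + a
  set g : ℝ → ℝ := fun s => Real.exp s * (s - a) - (s + a) with hg
  have hcont : ContinuousOn g (Set.Icc a (a + 2)) := by
    fun_prop
  have hga : g a = -(2 * a) := by simp [hg]; ring
  have hgb : 0 ≤ g (a + 2) := by
    have h1 : a + 3 ≤ Real.exp (a + 2) := by
      have := Real.add_one_le_exp (a + 2); linarith
    have : (a + 3) * 2 - (a + 2 + a) ≤ g (a + 2) := by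
      simp only [hg]
      have h2 : (a + 3) * 2 ≤ Real.exp (a + 2) * (a + 2 - a) := by
        nlinarith
      linarith
    linarith
  have hmem : (0 : ℝ) ∈ Set.Icc (g a) (g (a + 2)) := by
    constructor
    · rw [hga]; linarith
    · exact hgb
  obtain ⟨s, hs_mem, hgs⟩ := intermediate_value_Icc (by linarith) hcont hmem
  have hsa : a < s := by
    rcases lt_or_eq_of_le hs_mem.1 with h | h
    · exact h
    · exfalso; rw [← h] at hgs; rw [hga] at hgs; linarith
  have hs0 : 0 < s := lt_trans ha0 hsa
  have heq : Real.exp s * (s - a) = s + a := by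
    have : g s = 0 := hgs
    simp only [hg] at this; linarith
  refine ⟨s, hsa, hs0, ?_, ?_, ?_⟩
  · have h2 : Real.exp (2 * s) = Real.exp s * Real.exp s := by
      rw [← Real.exp_add]; ring_nf
    calc Real.exp (2 * s) * (s - a) ^ 2
        = (Real.exp s * (s - a)) * (Real.exp s * (s - a)) := by rw [h2]; ring
      _ = (s + a) ^ 2 := by rw [heq]; ring
  · have : a ^ 2 < s ^ 2 := by nlinarith
    linarith
  · -- eigenfunction
    set φ : ℝ → ℝ := fun x => (s - a) * Real.exp (s * x) + (s + a) * Real.exp (-s * x) with hφ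
    have hd1 : ∀ x, HasDerivAt φ
        ((s - a) * s * Real.exp (s * x) + (s + a) * (-s) * Real.exp (-s * x)) x := by
      intro x
      exact (hasDerivAt_aux (s - a) s x).add (hasDerivAt_aux (s + a) (-s) x)
    have hderiv : deriv φ = fun x =>
        (s - a) * s * Real.exp (s * x) + (s + a) * (-s) * Real.exp (-s * x) := by
      funext x; exact (hd1 x).deriv
    have hd2 : ∀ x, HasDerivAt (deriv φ)
        ((s - a) * s * s * Real.exp (s * x) + (s + a) * (-s) * (-s) * Real.exp (-s * x)) x := by
      intro x
      rw [hderiv]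
      have := (hasDerivAt_aux ((s - a) * s) s x).add (hasDerivAt_aux ((s + a) * (-s)) (-s) x)
      exact this
    refine ⟨φ, ⟨0, by simp, ?_⟩, fun x => (hd1 x).differentiableAt,
        fun x => (hd2 x).differentiableAt, ?_, ?_, ?_⟩
    · show φ 0 ≠ 0
      have h0 : φ 0 = 2 * s := by simp [hφ]; ring
      rw [h0]; positivity
    · intro x _
      rw [(hd2 x).deriv]
      simp only [hφ]
      ring
    · rw [hderiv]
      simp only [hφ, mul_zero, neg_zero, Real.exp_zero, mul_one]
      ring
    · rw [hderiv]
      simp only [hφ, mul_one]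
      -- (s-a)*s*e^s - (s+a)*s*e^{-s} = a*((s-a)*e^s + (s+a)*e^{-s})
      -- equivalent to (s-a)^2 e^s = (s+a)^2 e^{-s}, i.e. e^s (s-a) = (s+a) (times (s+a)e^{-s}/(s-a)? )
      have hexp : Real.exp (-s) = 1 / Real.exp s := by
        rw [eq_div_iff (Real.exp_ne_zero _), ← Real.exp_add]
        simp
      rw [hexp]
      have hene : Real.exp s ≠ 0 := Real.exp_ne_zero _
      field_simp
      nlinarith [heq, Real.exp_pos s]
end

section
/- For every λ > 1 there exists s ∈ (0, λ+1) such that e^{s}·((λ+1) − s) = s + (λ+1). Consequently, there exists an eigenvalue μ := s² − 1 ∈ (−1, (λ+1)² − 1) of the linearized problem at the trivial equilibrium, i.e., a function φ, not identically zero on [0,1], twice differentiable with φ'' = (1+μ)φ on [0,1], −φ'(0) = (λ+1)φ(0) and φ'(1) = (λ+1)φ(1). Thus for λ > 1 a second eigenvalue above −1 appears. -/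
lemma expComb_hasDerivAt (s p q x : ℝ) :
    HasDerivAt (fun x => p * Real.exp (s * x) + q * Real.exp (-(s * x)))
      ((p * s) * Real.exp (s * x) + (-(q * s)) * Real.exp (-(s * x))) x := by
  have h1 : HasDerivAt (fun x : ℝ => s * x) s x := by
    simpa using (hasDerivAt_id x).const_mul s
  have h2 := (Real.hasDerivAt_exp (s * x)).comp x h1
  have h3 : HasDerivAt (fun x : ℝ => -(s * x)) (-s) x := h1.neg
  have h4 := (Real.hasDerivAt_exp (-(s * x))).comp x h3
  have := (h2.const_mul p).add (h4.const_mul q)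
  convert this using 1
  · rfl
  · rfl
  · rfl
  · ring

lemma expComb_deriv (s p q : ℝ) :
    deriv (fun x => p * Real.exp (s * x) + q * Real.exp (-(s * x)))
      = fun x => (p * s) * Real.exp (s * x) + (-(q * s)) * Real.exp (-(s * x)) :=
  funext fun x => (expComb_hasDerivAt s p q x).deriv


/-- For every λ > 1 there is s ∈ (0, λ+1) with e^s((λ+1)-s) = s+(λ+1), yielding a
second eigenvalue μ = s² - 1 ∈ (-1, (λ+1)² - 1) of the linearization at the
trivial equilibrium. -/
theorem second_eigenvalue_exists (lam : ℝ) (hlam : 1 < lam) :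
    ∃ s : ℝ, 0 < s ∧ s < lam + 1 ∧
      Real.exp s * ((lam + 1) - s) = s + (lam + 1) ∧
      -1 < s ^ 2 - 1 ∧ s ^ 2 - 1 < (lam + 1) ^ 2 - 1 ∧
      ∃ φ : ℝ → ℝ, (∃ x ∈ Set.Icc (0:ℝ) 1, φ x ≠ 0) ∧
        Differentiable ℝ φ ∧ Differentiable ℝ (deriv φ) ∧
        (∀ x ∈ Set.Icc (0:ℝ) 1, deriv (deriv φ) x = (1 + (s ^ 2 - 1)) * φ x) ∧
        -(deriv φ 0) = (lam + 1) * φ 0 ∧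
        deriv φ 1 = (lam + 1) * φ 1 := by
  -- Find s by the intermediate value theorem
  set f : ℝ → ℝ := fun s => Real.exp s * ((lam + 1) - s) - (s + (lam + 1)) with hf
  have hab : (lam - 1) / 2 ≤ lam + 1 := by linarith
  have hcont : ContinuousOn f (Set.Icc ((lam - 1) / 2) (lam + 1)) := by fun_prop
  have hfb : f (lam + 1) ≤ 0 := by
    simp only [hf]; nlinarith [Real.exp_pos (lam + 1)]
  have hfa : 0 ≤ f ((lam - 1) / 2) := by
    simp only [hf]
    nlinarith [Real.add_one_le_exp ((lam - 1) / 2)]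
  have h0 : (0 : ℝ) ∈ Set.Icc (f (lam + 1)) (f ((lam - 1) / 2)) := ⟨hfb, hfa⟩
  obtain ⟨s, hsIcc, hseq⟩ := intermediate_value_Icc' hab hcont h0
  have hs0 : 0 < s := lt_of_lt_of_le (by linarith) hsIcc.1
  have hslt : s < lam + 1 := lt_of_le_of_ne hsIcc.2 (by
    rintro rfl
    have : f (lam + 1) = 0 := hseq
    simp only [hf] at this
    nlinarith [Real.exp_pos (lam + 1)])
  have heq : Real.exp s * ((lam + 1) - s) = s + (lam + 1) := by
    have := hseq; simp only [hf] at this; linarith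
  refine ⟨s, hs0, hslt, heq, by nlinarith, by nlinarith, ?_⟩
  -- Eigenfunction
  set a : ℝ := (s - (lam + 1)) / 2 with ha
  set b : ℝ := (s + (lam + 1)) / 2 with hb
  have hE : (0:ℝ) < Real.exp s := Real.exp_pos s
  have hEne : Real.exp s ≠ 0 := ne_of_gt hE
  have hd1 := expComb_deriv s a b
  have hd2 := expComb_deriv s (a * s) (-(b * s))
  refine ⟨fun x => a * Real.exp (s * x) + b * Real.exp (-(s * x)), ?_, ?_, ?_, ?_, ?_, ?_⟩
  · refine ⟨0, by simp, ?_⟩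
    simp only [mul_zero, neg_zero, Real.exp_zero, mul_one]
    have : a + b = s := by rw [ha, hb]; ring
    rw [this]; exact ne_of_gt hs0
  · intro x
    exact ((expComb_hasDerivAt s a b x).differentiableAt)
  · rw [hd1]
    intro x
    exact ((expComb_hasDerivAt s (a * s) (-(b * s)) x).differentiableAt)
  · intro x _
    rw [hd1, hd2]
    ring
  · rw [hd1]
    simp only [mul_zero, neg_zero, Real.exp_zero, mul_one]
    rw [ha, hb]; ring
  · rw [hd1]
    simp only [mul_one]
    rw [Real.exp_neg]
    rw [ha, hb]
    field_simp
    nlinarith [heq, sq_nonneg (Real.exp s * ((lam+1) - s) - (s + (lam+1))), hE]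
end

section
/- Let e denote Euler's number and σ₁ := (e−1)/(e+1). For every λ > σ₁ there exist μ > 0 and a function φ : ℝ → ℝ, not identically zero on [0,1], twice differentiable with φ''(x) = (1+μ)·φ(x) for all x ∈ [0,1], satisfying −φ'(0) = λ·φ(0) and φ'(1) = λ·φ(1). That is, for λ > σ₁ the linearization at infinity has a positive eigenvalue. -/
lemma sinh_div_cosh_half : Real.sinh (1/2) / Real.cosh (1/2) =
    (Real.exp 1 - 1) / (Real.exp 1 + 1) := by
  have h1 : Real.exp (1/2) * Real.exp (1/2) = Real.exp 1 := by
    rw [← Real.exp_add]; norm_num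
  have h2 : Real.exp (1/2) * Real.exp (-(1/2)) = 1 := by
    rw [← Real.exp_add]; norm_num
  have hpos : 0 < Real.exp (1/2) := Real.exp_pos _
  have hpos2 : 0 < Real.exp (-(1/2)) := Real.exp_pos _
  have hexp1 : (1:ℝ) < Real.exp 1 := by
    have := Real.add_one_lt_exp (x := 1) one_ne_zero
    linarith
  have he1 : (0:ℝ) < Real.exp 1 + 1 := by linarith
  rw [Real.sinh_eq, Real.cosh_eq,
    div_eq_div_iff (by positivity : ((Real.exp (1/2) + Real.exp (-(1/2)))/2 : ℝ) ≠ 0) (by positivity : (Real.exp 1 + 1 : ℝ) ≠ 0)]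
  nlinarith [h1, h2]

/-- For λ > σ₁ = (e-1)/(e+1), the linearization at infinity has a positive eigenvalue. -/
theorem positive_eigenvalue_at_infinity (lam : ℝ)
    (hlam : (Real.exp 1 - 1) / (Real.exp 1 + 1) < lam) :
    ∃ μ : ℝ, 0 < μ ∧
      ∃ φ : ℝ → ℝ, (∃ x ∈ Set.Icc (0:ℝ) 1, φ x ≠ 0) ∧
        Differentiable ℝ φ ∧ Differentiable ℝ (deriv φ) ∧
        (∀ x ∈ Set.Icc (0:ℝ) 1, deriv (deriv φ) x = (1 + μ) * φ x) ∧
        -(deriv φ 0) = lam * φ 0 ∧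
        deriv φ 1 = lam * φ 1 := by
  -- σ₁ > 0, hence lam > 0
  have hexp1 : (1:ℝ) < Real.exp 1 := by
    have := Real.add_one_lt_exp (x := 1) one_ne_zero
    linarith
  have hsig : (0:ℝ) < (Real.exp 1 - 1) / (Real.exp 1 + 1) := by
    apply div_pos <;> linarith
  have hlam0 : 0 < lam := lt_trans hsig hlam
  -- the shooting function
  set g : ℝ → ℝ := fun ω => ω * Real.sinh (ω/2) - lam * Real.cosh (ω/2) with hg
  have hcont : Continuous g := by
    exact (continuous_id.mul (Real.continuous_sinh.comp (continuous_id.div_const 2))).sub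
      (continuous_const.mul (Real.continuous_cosh.comp (continuous_id.div_const 2)))
  have hg1 : g 1 < 0 := by
    have hc : 0 < Real.cosh (1/2 : ℝ) := Real.cosh_pos _
    have h : Real.sinh (1/2) / Real.cosh (1/2) < lam := sinh_div_cosh_half ▸ hlam
    have := (div_lt_iff₀ hc).mp h
    simp only [hg, one_mul]
    linarith
  set M : ℝ := 2*lam + 2 with hM
  have hM1 : (1:ℝ) ≤ M := by simp only [hM]; linarith
  have hgM : 0 < g M := by
    have hs : M/2 < Real.sinh (M/2) := Real.self_lt_sinh_iff.mpr (by simp only [hM]; linarith)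
    have hch : Real.cosh (M/2) ≤ Real.sinh (M/2) + 1 := by
      have heq : Real.cosh (M/2) - Real.sinh (M/2) = Real.exp (-(M/2)) := by
        rw [Real.cosh_eq, Real.sinh_eq]; ring
      have he : Real.exp (-(M/2)) ≤ 1 := Real.exp_le_one_iff.mpr (by simp only [hM]; linarith)
      linarith
    have hsp : lam + 1 ≤ Real.sinh (M/2) := by
      have : lam + 1 ≤ M/2 := by simp only [hM]; linarith
      linarith
    have key : (lam + 2) * (lam + 1) ≤ (M - lam) * Real.sinh (M/2) :=
      mul_le_mul (by simp only [hM]; linarith) hsp (by linarith) (by simp only [hM]; linarith)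
    have hlow : M * Real.sinh (M/2) - lam * Real.cosh (M/2) ≥
        (M - lam) * Real.sinh (M/2) - lam := by nlinarith
    have hP : (0:ℝ) < (lam + 2) * (lam + 1) - lam := by nlinarith [mul_self_nonneg lam, hlam0]
    show 0 < M * Real.sinh (M/2) - lam * Real.cosh (M/2)
    linarith [key, hlow, hP]
  -- IVT
  obtain ⟨ω, hωmem, hωeq⟩ := intermediate_value_Icc hM1 hcont.continuousOn
    (Set.mem_Icc.mpr ⟨le_of_lt hg1, le_of_lt hgM⟩)
  obtain ⟨hω1, hωM⟩ := Set.mem_Icc.mp hωmem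
  have hωne : ω ≠ 1 := by rintro rfl; rw [hωeq] at hg1; exact absurd hg1 (by simp)
  have hωgt : 1 < ω := lt_of_le_of_ne hω1 (Ne.symm hωne)
  have hBC : ω * Real.sinh (ω/2) = lam * Real.cosh (ω/2) := by
    have h0 : g ω = 0 := hωeq
    simp only [hg] at h0; linarith
  -- derivative facts
  have hd1 : ∀ y : ℝ, HasDerivAt (fun x => Real.cosh (ω*x - ω/2))
      (ω * Real.sinh (ω*y - ω/2)) y := by
    intro y
    have hin : HasDerivAt (fun x : ℝ => ω*x - ω/2) ω y := by
      simpa using ((hasDerivAt_id y).const_mul ω).sub_const (ω/2)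
    simpa [mul_comm, Function.comp_def] using (Real.hasDerivAt_cosh (ω*y - ω/2)).comp y hin
  have hderiv : deriv (fun x => Real.cosh (ω*x - ω/2)) =
      fun y => ω * Real.sinh (ω*y - ω/2) := funext fun y => (hd1 y).deriv
  have hd2 : ∀ y : ℝ, HasDerivAt (fun x => ω * Real.sinh (ω*x - ω/2))
      (ω * (ω * Real.cosh (ω*y - ω/2))) y := by
    intro y
    have hin : HasDerivAt (fun x : ℝ => ω*x - ω/2) ω y := by
      simpa using ((hasDerivAt_id y).const_mul ω).sub_const (ω/2)
    have := ((Real.hasDerivAt_sinh (ω*y - ω/2)).comp y hin).const_mul ω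
    simpa [mul_comm, mul_assoc, mul_left_comm] using this
  refine ⟨ω^2 - 1, by nlinarith, fun x => Real.cosh (ω*x - ω/2), ?_, ?_, ?_, ?_, ?_, ?_⟩
  · refine ⟨1/2, by norm_num, ?_⟩
    show Real.cosh (ω*(1/2) - ω/2) ≠ 0
    rw [show ω*(1/2) - ω/2 = (0:ℝ) by ring, Real.cosh_zero]
    norm_num
  · exact fun y => (hd1 y).differentiableAt
  · rw [hderiv]; exact fun y => (hd2 y).differentiableAt
  · intro x _
    rw [hderiv, (hd2 x).deriv]
    ring_nf
  · rw [hderiv]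
    show -(ω * Real.sinh (ω*0 - ω/2)) = lam * Real.cosh (ω*0 - ω/2)
    rw [show ω*0 - ω/2 = -(ω/2) by ring, Real.sinh_neg, Real.cosh_neg]
    linarith [hBC]
  · rw [hderiv]
    show ω * Real.sinh (ω*1 - ω/2) = lam * Real.cosh (ω*1 - ω/2)
    rw [show ω*1 - ω/2 = ω/2 by ring]
    exact hBC
end

section
/- Let e denote Euler's number and σ₂ := (e+1)/(e−1). For every λ > σ₂ there exist μ₁ > μ₂ > 0 and functions φ₁, φ₂ : ℝ → ℝ, each not identically zero on [0,1] and twice differentiable, with φᵢ''(x) = (1+μᵢ)·φᵢ(x) for all x ∈ [0,1], −φᵢ'(0) = λ·φᵢ(0) and φᵢ'(1) = λ·φᵢ(1), for i = 1, 2. That is, for λ > σ₂ the linearization at infinity has at least two distinct positive eigenvalues. -/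
open Real

private lemma hd_cosh (ω c x : ℝ) :
    HasDerivAt (fun y => Real.cosh (ω * (y - c))) (ω * Real.sinh (ω * (x - c))) x := by
  have h1 : HasDerivAt (fun y : ℝ => ω * (y - c)) ω x := by
    simpa using ((hasDerivAt_id x).sub_const c).const_mul ω
  simpa [mul_comm, Function.comp_def] using (Real.hasDerivAt_cosh (ω * (x - c))).comp x h1

private lemma hd_sinh (ω c x : ℝ) :
    HasDerivAt (fun y => Real.sinh (ω * (y - c))) (ω * Real.cosh (ω * (x - c))) x := by
  have h1 : HasDerivAt (fun y : ℝ => ω * (y - c)) ω x := by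
    simpa using ((hasDerivAt_id x).sub_const c).const_mul ω
  simpa [mul_comm, Function.comp_def] using (Real.hasDerivAt_sinh (ω * (x - c))).comp x h1

private lemma deriv_cosh' (ω c : ℝ) :
    deriv (fun y => Real.cosh (ω * (y - c))) = fun x => ω * Real.sinh (ω * (x - c)) := by
  funext x; exact (hd_cosh ω c x).deriv

private lemma deriv_sinh' (ω c : ℝ) :
    deriv (fun y => Real.sinh (ω * (y - c))) = fun x => ω * Real.cosh (ω * (x - c)) := by
  funext x; exact (hd_sinh ω c x).deriv

set_option maxHeartbeats 1000000 in
/-- For λ > σ₂ = (e+1)/(e-1), the linearization at infinity has at least two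
distinct positive eigenvalues. -/
theorem two_positive_eigenvalues_at_infinity (lam : ℝ)
    (hlam : (Real.exp 1 + 1) / (Real.exp 1 - 1) < lam) :
    ∃ μ₁ μ₂ : ℝ, μ₂ < μ₁ ∧ 0 < μ₂ ∧
      (∃ φ₁ : ℝ → ℝ, (∃ x ∈ Set.Icc (0:ℝ) 1, φ₁ x ≠ 0) ∧
        Differentiable ℝ φ₁ ∧ Differentiable ℝ (deriv φ₁) ∧
        (∀ x ∈ Set.Icc (0:ℝ) 1, deriv (deriv φ₁) x = (1 + μ₁) * φ₁ x) ∧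
        -(deriv φ₁ 0) = lam * φ₁ 0 ∧
        deriv φ₁ 1 = lam * φ₁ 1) ∧
      (∃ φ₂ : ℝ → ℝ, (∃ x ∈ Set.Icc (0:ℝ) 1, φ₂ x ≠ 0) ∧
        Differentiable ℝ φ₂ ∧ Differentiable ℝ (deriv φ₂) ∧
        (∀ x ∈ Set.Icc (0:ℝ) 1, deriv (deriv φ₂) x = (1 + μ₂) * φ₂ x) ∧
        -(deriv φ₂ 0) = lam * φ₂ 0 ∧
        deriv φ₂ 1 = lam * φ₂ 1) := by
  have he1 : (1:ℝ) < Real.exp 1 := by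
    have := Real.exp_one_gt_d9; linarith
  have hsig : (1:ℝ) < (Real.exp 1 + 1) / (Real.exp 1 - 1) := by
    rw [lt_div_iff₀ (by linarith)]; linarith
  have hlam1 : (1:ℝ) < lam := lt_trans hsig hlam
  -- G ω = ω cosh(ω/2) - lam sinh(ω/2)
  set G : ℝ → ℝ := fun ω => ω * Real.cosh (ω/2) - lam * Real.sinh (ω/2) with hG
  have hGcont : Continuous G := by fun_prop
  -- G 1 < 0 : cosh(1/2)/sinh(1/2) = σ₂ < lam
  have hsinh_half_pos : 0 < Real.sinh (1/2 : ℝ) := Real.sinh_pos_iff.mpr (by norm_num)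
  have hG1 : G 1 < 0 := by
    have ha : Real.exp (1/2 : ℝ) * Real.exp (1/2 : ℝ) = Real.exp 1 := by
      rw [← Real.exp_add]; norm_num
    have hane : Real.exp (1/2 : ℝ) ≠ 0 := (Real.exp_pos _).ne'
    have hcs : (Real.exp 1 - 1) * Real.cosh (1/2 : ℝ)
        = (Real.exp 1 + 1) * Real.sinh (1/2) := by
      rw [Real.cosh_eq, Real.sinh_eq, ← ha, Real.exp_neg]
      field_simp
    have hl2 : Real.exp 1 + 1 < lam * (Real.exp 1 - 1) :=
      (div_lt_iff₀ (by linarith)).mp hlam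
    simp only [hG]
    nlinarith [hsinh_half_pos, he1, hcs, hl2]
  have hGl : 0 ≤ G lam := by
    have h1 : Real.sinh (lam/2) < Real.cosh (lam/2) := Real.sinh_lt_cosh (lam/2)
    simp only [hG]
    nlinarith [h1, hlam1]
  obtain ⟨ω₂, hω₂mem, hω₂⟩ : ∃ ω ∈ Set.Icc (1:ℝ) lam, G ω = 0 := by
    have := intermediate_value_Icc (le_of_lt hlam1) hGcont.continuousOn
    exact this ⟨le_of_lt hG1, hGl⟩
  have hω₂gt1 : 1 < ω₂ := by
    rcases lt_or_eq_of_le hω₂mem.1 with h | h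
    · exact h
    · exfalso; rw [← h] at hω₂; linarith
  have hω₂pos : 0 < ω₂ := by linarith
  have hsinhω₂ : 0 < Real.sinh (ω₂/2) := Real.sinh_pos_iff.mpr (by linarith)
  have hcoshω₂ : 0 < Real.cosh (ω₂/2) := Real.cosh_pos _
  -- F ω = ω sinh(ω/2) - lam cosh(ω/2)
  set F : ℝ → ℝ := fun ω => ω * Real.sinh (ω/2) - lam * Real.cosh (ω/2) with hF
  have hFcont : Continuous F := by fun_prop
  have hFω₂ : F ω₂ < 0 := by
    -- F ω₂ * sinh(ω₂/2) = ω₂ sinh² - lam cosh sinh = ω₂ (sinh² - cosh²) = -ω₂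
    have hlamval : lam * Real.sinh (ω₂/2) = ω₂ * Real.cosh (ω₂/2) := by
      simp only [hG] at hω₂; linarith
    have hid : Real.cosh (ω₂/2) ^ 2 - Real.sinh (ω₂/2) ^ 2 = 1 := Real.cosh_sq_sub_sinh_sq _
    have hmul : F ω₂ * Real.sinh (ω₂/2) = -ω₂ := by
      simp only [hF]; nlinarith
    by_contra h
    push_neg at h
    nlinarith [mul_nonneg h hsinhω₂.le]
  -- F at M = lam + 2 is nonneg
  set M : ℝ := lam + 2 with hM
  have hFM : 0 ≤ F M := by
    have hy : (0:ℝ) < M/2 := by linarith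
    have h1 : Real.cosh (M/2) - Real.sinh (M/2) ≤ 1 := by
      have he : Real.cosh (M/2) - Real.sinh (M/2) = Real.exp (-(M/2)) := by
        rw [Real.cosh_eq, Real.sinh_eq]; ring
      rw [he]
      exact Real.exp_le_one_iff.mpr (by linarith)
    have h2 : Real.exp (M/2) ≤ 2 * Real.cosh (M/2) := by
      rw [Real.cosh_eq]; nlinarith [Real.exp_pos (-(M/2))]
    have h3 : (1 + M/4) ^ 2 ≤ Real.exp (M/2) := by
      have := Real.add_one_le_exp (M/4)
      have he : Real.exp (M/4) * Real.exp (M/4) = Real.exp (M/2) := by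
        rw [← Real.exp_add]; ring_nf
      nlinarith [Real.exp_pos (M/4)]
    have h4 : M ≤ 2 * Real.cosh (M/2) := by nlinarith [sq_nonneg (1 - M/4)]
    simp only [hF]
    nlinarith [Real.cosh_pos (M/2), h1, h4, hM]
  have hω₂M : ω₂ ≤ M := by
    have := hω₂mem.2; linarith
  obtain ⟨ω₁, hω₁mem, hω₁⟩ : ∃ ω ∈ Set.Icc ω₂ M, F ω = 0 := by
    have := intermediate_value_Icc hω₂M hFcont.continuousOn
    exact this ⟨le_of_lt hFω₂, hFM⟩
  have hω₁gt : ω₂ < ω₁ := by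
    rcases lt_or_eq_of_le hω₁mem.1 with h | h
    · exact h
    · exfalso; rw [h] at hFω₂; linarith
  have hω₁pos : 0 < ω₁ := by linarith
  refine ⟨ω₁^2 - 1, ω₂^2 - 1, by nlinarith, by nlinarith, ?_, ?_⟩
  · -- even mode
    refine ⟨fun x => Real.cosh (ω₁ * (x - 1/2)), ?_, ?_, ?_, ?_, ?_, ?_⟩
    · exact ⟨0, by norm_num, (Real.cosh_pos _).ne'⟩
    · exact fun x => (hd_cosh ω₁ (1/2) x).differentiableAt
    · rw [deriv_cosh']
      exact fun x => ((hd_sinh ω₁ (1/2) x).const_mul ω₁).differentiableAt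
    · intro x hx
      rw [deriv_cosh']
      have : deriv (fun x => ω₁ * Real.sinh (ω₁ * (x - 1/2))) x
          = ω₁ * (ω₁ * Real.cosh (ω₁ * (x - 1/2))) := ((hd_sinh ω₁ (1/2) x).const_mul ω₁).deriv
      rw [this]; ring
    · rw [deriv_cosh']
      beta_reduce
      have h0 : ω₁ * ((0:ℝ) - 1/2) = -(ω₁/2) := by ring
      rw [h0, Real.sinh_neg, Real.cosh_neg]
      simp only [hF] at hω₁
      linarith
    · rw [deriv_cosh']
      beta_reduce
      have h0 : ω₁ * ((1:ℝ) - 1/2) = ω₁/2 := by ring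
      rw [h0]
      simp only [hF] at hω₁
      linarith
  · -- odd mode
    refine ⟨fun x => Real.sinh (ω₂ * (x - 1/2)), ?_, ?_, ?_, ?_, ?_, ?_⟩
    · refine ⟨0, by norm_num, ?_⟩
      beta_reduce
      have h0 : ω₂ * ((0:ℝ) - 1/2) = -(ω₂/2) := by ring
      rw [h0, Real.sinh_neg]
      exact neg_ne_zero.mpr (ne_of_gt hsinhω₂)
    · exact fun x => (hd_sinh ω₂ (1/2) x).differentiableAt
    · rw [deriv_sinh']
      exact fun x => ((hd_cosh ω₂ (1/2) x).const_mul ω₂).differentiableAt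
    · intro x hx
      rw [deriv_sinh']
      have : deriv (fun x => ω₂ * Real.cosh (ω₂ * (x - 1/2))) x
          = ω₂ * (ω₂ * Real.sinh (ω₂ * (x - 1/2))) := ((hd_cosh ω₂ (1/2) x).const_mul ω₂).deriv
      rw [this]; ring
    · rw [deriv_sinh']
      beta_reduce
      have h0 : ω₂ * ((0:ℝ) - 1/2) = -(ω₂/2) := by ring
      rw [h0, Real.sinh_neg, Real.cosh_neg]
      simp only [hG] at hω₂
      linarith
    · rw [deriv_sinh']
      beta_reduce
      have h0 : ω₂ * ((1:ℝ) - 1/2) = ω₂/2 := by ring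
      rw [h0]
      simp only [hG] at hω₂
      linarith
end

section
/- Let e denote Euler's number and σ₁ := (e−1)/(e+1). If λ < σ₁ and μ ≥ 0, then there is no function φ : ℝ → ℝ, not identically zero on [0,1], twice differentiable with φ''(x) = (1+μ)·φ(x) for all x ∈ [0,1], satisfying −φ'(0) = λ·φ(0) and φ'(1) = λ·φ(1). That is, for λ < σ₁ every eigenvalue of the linearization at infinity is strictly negative. -/
open MeasureTheory intervalIntegral Set Function

/-- Auxiliary weight function `w x = tanh (x - 1/2)` for the trace inequality. -/
noncomputable def traceW (x : ℝ) : ℝ := Real.sinh (x - 1/2) / Real.cosh (x - 1/2)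

lemma traceW_cont : Continuous traceW :=
  (Real.continuous_sinh.comp (continuous_id.sub continuous_const)).div
    (Real.continuous_cosh.comp (continuous_id.sub continuous_const))
    (fun x => (Real.cosh_pos _).ne')

lemma traceW_one : traceW 1 = (Real.exp 1 - 1) / (Real.exp 1 + 1) := by
  have ha : Real.exp (1/2 : ℝ) * Real.exp (1/2 : ℝ) = Real.exp 1 := by
    rw [← Real.exp_add]; norm_num
  have hap : (0:ℝ) < Real.exp (1/2 : ℝ) := Real.exp_pos _
  have hep : (0:ℝ) < Real.exp 1 := Real.exp_pos _
  unfold traceW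
  rw [show (1:ℝ) - 1/2 = 1/2 by norm_num, Real.sinh_eq, Real.cosh_eq, Real.exp_neg]
  have h1 : Real.exp (1/2:ℝ) + (Real.exp (1/2:ℝ))⁻¹ ≠ 0 := by positivity
  have h2 : Real.exp 1 + 1 ≠ 0 := by positivity
  field_simp
  nlinarith [ha]

lemma traceW_zero : traceW 0 = -((Real.exp 1 - 1) / (Real.exp 1 + 1)) := by
  have : traceW 0 = - traceW 1 := by
    unfold traceW
    rw [show (0:ℝ) - 1/2 = -(1 - 1/2) by ring, Real.sinh_neg, Real.cosh_neg, neg_div]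
  rw [this, traceW_one]

lemma traceW_hasDerivAt (x : ℝ) : HasDerivAt traceW (1 - traceW x ^ 2) x := by
  have hs : HasDerivAt (fun y => Real.sinh (y - 1/2)) (Real.cosh (x - 1/2)) x := by
    exact ((Real.hasDerivAt_sinh (x - 1/2)).comp x ((hasDerivAt_id x).sub_const (1/2))).congr_deriv (by simp : _ = Real.cosh (x - 1/2))
  have hcc : HasDerivAt (fun y => Real.cosh (y - 1/2)) (Real.sinh (x - 1/2)) x := by
    exact ((Real.hasDerivAt_cosh (x - 1/2)).comp x ((hasDerivAt_id x).sub_const (1/2))).congr_deriv (by simp : _ = Real.sinh (x - 1/2))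
  have hne : Real.cosh (x - 1/2) ≠ 0 := (Real.cosh_pos _).ne'
  have h := hs.div hcc hne
  refine h.congr_deriv ?_; symm
  have hid : Real.cosh (x-1/2)^2 - Real.sinh (x-1/2)^2 = 1 := Real.cosh_sq_sub_sinh_sq _
  unfold traceW
  generalize hS : Real.sinh (x - 1/2) = s at *
  generalize hC : Real.cosh (x - 1/2) = c at *
  field_simp

/-- For λ < σ₁ = (e-1)/(e+1), the linearization at infinity has no eigenvalue μ ≥ 0. -/
theorem no_nonnegative_eigenvalue_at_infinity (lam μ : ℝ)
    (hlam : lam < (Real.exp 1 - 1) / (Real.exp 1 + 1)) (hμ : 0 ≤ μ) :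
    ¬ ∃ φ : ℝ → ℝ, (∃ x ∈ Set.Icc (0:ℝ) 1, φ x ≠ 0) ∧
      Differentiable ℝ φ ∧ Differentiable ℝ (deriv φ) ∧
      (∀ x ∈ Set.Icc (0:ℝ) 1, deriv (deriv φ) x = (1 + μ) * φ x) ∧
      -(deriv φ 0) = lam * φ 0 ∧
      deriv φ 1 = lam * φ 1 := by
  rintro ⟨φ, ⟨x₀, hx₀, hφx₀⟩, hd1, hd2, hode, hbc0, hbc1⟩
  have hc : Continuous φ := hd1.continuous
  have hc' : Continuous (deriv φ) := hd2.continuous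
  -- energy identity
  have hint1 : IntervalIntegrable (fun x => deriv φ x ^ 2 + (1+μ) * φ x ^ 2) volume 0 1 :=
    ((hc'.pow 2).add (continuous_const.mul (hc.pow 2))).intervalIntegrable 0 1
  have hE : ∫ x in (0:ℝ)..1, (deriv φ x ^ 2 + (1+μ) * φ x ^ 2) = lam * (φ 0 ^ 2 + φ 1 ^ 2) := by
    have key : ∫ x in (0:ℝ)..1, (deriv φ x ^ 2 + (1+μ) * φ x ^ 2)
        = (fun x => φ x * deriv φ x) 1 - (fun x => φ x * deriv φ x) 0 := by
      refine intervalIntegral.integral_eq_sub_of_hasDerivAt (f := fun x => φ x * deriv φ x)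
        ?_ hint1
      intro x hx
      rw [Set.uIcc_of_le (by norm_num : (0:ℝ) ≤ 1)] at hx
      have h := ((hd1 x).hasDerivAt).mul ((hd2 x).hasDerivAt)
      rw [hode x hx] at h
      refine h.congr_deriv ?_; ring
    simp only at key
    rw [key, hbc1, show deriv φ 0 = -(lam * φ 0) by linarith]
    ring
  -- trace identity
  have hint2 : IntervalIntegrable
      (fun x => (1 - traceW x ^ 2) * φ x ^ 2 + traceW x * (2 * φ x * deriv φ x)) volume 0 1 := by
    apply Continuous.intervalIntegrable
    have := traceW_cont
    continuity
  have hG : ∫ x in (0:ℝ)..1, ((1 - traceW x ^ 2) * φ x ^ 2 + traceW x * (2 * φ x * deriv φ x))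
      = (Real.exp 1 - 1) / (Real.exp 1 + 1) * (φ 0 ^ 2 + φ 1 ^ 2) := by
    have key : ∫ x in (0:ℝ)..1, ((1 - traceW x ^ 2) * φ x ^ 2 + traceW x * (2 * φ x * deriv φ x))
        = (fun x => traceW x * φ x ^ 2) 1 - (fun x => traceW x * φ x ^ 2) 0 := by
      refine intervalIntegral.integral_eq_sub_of_hasDerivAt
        (f := fun x => traceW x * φ x ^ 2) ?_ hint2
      intro x _
      have h := (traceW_hasDerivAt x).mul (((hd1 x).hasDerivAt).pow 2)
      refine h.congr_deriv ?_; simp only [Pi.pow_apply]; ring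
    simp only at key
    rw [key, traceW_one, traceW_zero]
    ring
  have hint3 : IntervalIntegrable (fun x => deriv φ x ^ 2 + φ x ^ 2) volume 0 1 :=
    ((hc'.pow 2).add (hc.pow 2)).intervalIntegrable 0 1
  have hmono1 : (∫ x in (0:ℝ)..1, ((1 - traceW x ^ 2) * φ x ^ 2 + traceW x * (2 * φ x * deriv φ x)))
      ≤ ∫ x in (0:ℝ)..1, (deriv φ x ^ 2 + φ x ^ 2) := by
    apply intervalIntegral.integral_mono_on (by norm_num) hint2 hint3
    intro x _
    nlinarith [sq_nonneg (deriv φ x - traceW x * φ x)]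
  have hmono2 : (∫ x in (0:ℝ)..1, (deriv φ x ^ 2 + φ x ^ 2))
      ≤ ∫ x in (0:ℝ)..1, (deriv φ x ^ 2 + (1+μ) * φ x ^ 2) := by
    apply intervalIntegral.integral_mono_on (by norm_num) hint3 hint1
    intro x _
    nlinarith [sq_nonneg (φ x)]
  have hS : φ 0 ^ 2 + φ 1 ^ 2 = 0 := by
    have h1 : (Real.exp 1 - 1) / (Real.exp 1 + 1) * (φ 0 ^ 2 + φ 1 ^ 2)
        ≤ lam * (φ 0 ^ 2 + φ 1 ^ 2) := by
      rw [← hG, ← hE]; linarith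
    nlinarith [sq_nonneg (φ 0), sq_nonneg (φ 1)]
  have hφ0 : φ 0 = 0 := by nlinarith [sq_nonneg (φ 0), sq_nonneg (φ 1)]
  have hφ1 : φ 1 = 0 := by nlinarith [sq_nonneg (φ 0), sq_nonneg (φ 1)]
  -- total energy is zero
  have hE0 : ∫ x in (0:ℝ)..1, (deriv φ x ^ 2 + (1+μ) * φ x ^ 2) = 0 := by
    rw [hE, hS, mul_zero]
  have hintd : IntervalIntegrable (fun x => deriv φ x ^ 2) volume 0 1 :=
    (hc'.pow 2).intervalIntegrable 0 1
  have hintp : IntervalIntegrable (fun x => (1+μ) * φ x ^ 2) volume 0 1 :=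
    (continuous_const.mul (hc.pow 2)).intervalIntegrable 0 1
  have hsplit : (∫ x in (0:ℝ)..1, deriv φ x ^ 2) + ∫ x in (0:ℝ)..1, (1+μ) * φ x ^ 2 = 0 := by
    rw [← intervalIntegral.integral_add hintd hintp]; exact hE0
  have hnn1 : 0 ≤ ∫ x in (0:ℝ)..1, deriv φ x ^ 2 :=
    intervalIntegral.integral_nonneg (by norm_num) (fun x _ => sq_nonneg _)
  have hnn2 : 0 ≤ ∫ x in (0:ℝ)..1, (1+μ) * φ x ^ 2 :=
    intervalIntegral.integral_nonneg (by norm_num)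
      (fun x _ => mul_nonneg (by linarith) (sq_nonneg _))
  have hφ2zero : ∫ x in (0:ℝ)..1, φ x ^ 2 = 0 := by
    have h : ∫ x in (0:ℝ)..1, (1+μ) * φ x ^ 2 = 0 := by linarith
    rw [intervalIntegral.integral_const_mul] at h
    have hne : (1+μ) ≠ 0 := by linarith
    exact (mul_eq_zero.mp h).resolve_left hne
  -- but φ x₀ ≠ 0 forces positive integral
  have hx₀Ioo : x₀ ∈ Set.Ioo (0:ℝ) 1 := by
    rcases hx₀ with ⟨h0, h1⟩
    constructor
    · rcases lt_or_eq_of_le h0 with h | h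
      · exact h
      · exact absurd (h ▸ hφ0) hφx₀
    · rcases lt_or_eq_of_le h1 with h | h
      · exact h
      · exact absurd (h ▸ hφ1) hφx₀
  have hpos : 0 < ∫ x in (0:ℝ)..1, φ x ^ 2 := by
    rw [intervalIntegral.integral_pos_iff_support_of_nonneg_ae
      (Filter.Eventually.of_forall (fun x => sq_nonneg (φ x)))
      ((hc.pow 2).intervalIntegrable 0 1)]
    refine ⟨by norm_num, ?_⟩
    have hU : IsOpen ({x | φ x ≠ 0} ∩ Set.Ioo 0 1) :=
      (isOpen_ne.preimage hc).inter isOpen_Ioo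
    have hsub : {x | φ x ≠ 0} ∩ Set.Ioo 0 1 ⊆ support (fun x => φ x ^ 2) ∩ Set.Ioc 0 1 := by
      rintro x ⟨hx1, hx2⟩
      exact ⟨pow_ne_zero 2 hx1, hx2.1, le_of_lt hx2.2⟩
    calc (0:ENNReal) < volume ({x | φ x ≠ 0} ∩ Set.Ioo 0 1) :=
          hU.measure_pos volume ⟨x₀, hφx₀, hx₀Ioo⟩
      _ ≤ _ := measure_mono hsub
  linarith [hpos, hφ2zero.le]
end

section
/- Let e denote Euler's number and σ₁* := −2/(1+e). Let g : ℝ → ℝ satisfy g(0) = 0 and |g(a) − g(b)| ≤ |a − b| for all a, b ∈ ℝ (g is 1-Lipschitz), and let λ < σ₁*. If u : ℝ → ℝ is twice differentiable with u''(x) = u(x) for all x ∈ [0,1], −u'(0) = λ·u(0) + g(u(0)), and u'(1) = λ·u(1) + g(u(1)), then u(x) = 0 for all x ∈ [0,1]. That is, for λ < σ₁* the trivial solution is the unique equilibrium. -/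
set_option maxHeartbeats 1000000 in
/-- For λ < σ₁* = -2/(1+e) and g a 1-Lipschitz nonlinearity with g(0) = 0,
the trivial solution is the only equilibrium. -/
theorem trivial_unique_equilibrium (g : ℝ → ℝ) (hg0 : g 0 = 0)
    (hglip : ∀ a b : ℝ, |g a - g b| ≤ |a - b|)
    (lam : ℝ) (hlam : lam < -2 / (1 + Real.exp 1))
    (u : ℝ → ℝ) (hu : Differentiable ℝ u) (hu' : Differentiable ℝ (deriv u))
    (hODE : ∀ x ∈ Set.Icc (0:ℝ) 1, deriv (deriv u) x = u x)
    (hbc0 : -(deriv u 0) = lam * u 0 + g (u 0))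
    (hbc1 : deriv u 1 = lam * u 1 + g (u 1)) :
    ∀ x ∈ Set.Icc (0:ℝ) 1, u x = 0 := by
  set E := Real.exp 1 with hEdef
  have hE1 : (1:ℝ) < E := by
    have := Real.exp_one_gt_d9
    linarith
  have hE0 : (0:ℝ) < E := by linarith
  -- P x = exp(-x) * (u x + u' x) has zero derivative on [0,1]
  have hP : ∀ x ∈ Set.Icc (0:ℝ) 1,
      HasDerivAt (fun x => Real.exp (-x) * (u x + deriv u x)) 0 x := by
    intro x hx
    have h1 : HasDerivAt (fun x : ℝ => Real.exp (-x)) (-Real.exp (-x)) x := by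
      have h := (hasDerivAt_neg x).exp
      rwa [mul_neg_one] at h
    have h2 : HasDerivAt (fun x => u x + deriv u x)
        (deriv u x + deriv (deriv u) x) x :=
      ((hu x).hasDerivAt).add ((hu' x).hasDerivAt)
    have h3 : HasDerivAt (fun x => Real.exp (-x) * (u x + deriv u x))
        (-Real.exp (-x) * (u x + deriv u x) + Real.exp (-x) * (deriv u x + deriv (deriv u) x)) x :=
      h1.mul h2
    convert h3 using 1
    rw [hODE x hx]; ring
  have hQ : ∀ x ∈ Set.Icc (0:ℝ) 1,
      HasDerivAt (fun x => Real.exp x * (deriv u x - u x)) 0 x := by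
    intro x hx
    have h1 : HasDerivAt (fun x : ℝ => Real.exp x) (Real.exp x) x :=
      Real.hasDerivAt_exp x
    have h2 : HasDerivAt (fun x => deriv u x - u x)
        (deriv (deriv u) x - deriv u x) x :=
      ((hu' x).hasDerivAt).sub ((hu x).hasDerivAt)
    have h3 : HasDerivAt (fun x => Real.exp x * (deriv u x - u x))
        (Real.exp x * (deriv u x - u x) + Real.exp x * (deriv (deriv u) x - deriv u x)) x :=
      h1.mul h2
    convert h3 using 1
    rw [hODE x hx]; ring
  have hPcont : ContinuousOn (fun x => Real.exp (-x) * (u x + deriv u x))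
      (Set.Icc (0:ℝ) 1) :=
    (Continuous.mul (by continuity)
      (hu.continuous.add hu'.continuous)).continuousOn
  have hQcont : ContinuousOn (fun x => Real.exp x * (deriv u x - u x))
      (Set.Icc (0:ℝ) 1) :=
    (Continuous.mul Real.continuous_exp
      (hu'.continuous.sub hu.continuous)).continuousOn
  have hPconst : ∀ x ∈ Set.Icc (0:ℝ) 1,
      Real.exp (-x) * (u x + deriv u x) = u 0 + deriv u 0 := by
    intro x hx
    have := constant_of_has_deriv_right_zero hPcont
      (fun y hy => (hP y ⟨hy.1, hy.2.le⟩).hasDerivWithinAt) x hx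
    simpa using this
  have hQconst : ∀ x ∈ Set.Icc (0:ℝ) 1,
      Real.exp x * (deriv u x - u x) = deriv u 0 - u 0 := by
    intro x hx
    have := constant_of_has_deriv_right_zero hQcont
      (fun y hy => (hQ y ⟨hy.1, hy.2.le⟩).hasDerivWithinAt) x hx
    simpa using this
  -- boundary relations
  have hP1 := hPconst 1 (by norm_num)
  have hQ1 := hQconst 1 (by norm_num)
  rw [Real.exp_neg] at hP1
  have eP : u 1 + deriv u 1 = E * (u 0 + deriv u 0) := by
    have hEne : E ≠ 0 := ne_of_gt hE0
    field_simp at hP1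
    linarith [hP1]
  have eQ : E * (deriv u 1 - u 1) = deriv u 0 - u 0 := hQ1
  have hd0 : deriv u 0 = -(lam * u 0 + g (u 0)) := by linarith
  -- Lipschitz bounds
  have hga : |g (u 0)| ≤ |u 0| := by
    have := hglip (u 0) 0
    simpa [hg0] using this
  have hgb : |g (u 1)| ≤ |u 1| := by
    have := hglip (u 1) 0
    simpa [hg0] using this
  set K := E^2 + 1 - lam * (E^2 - 1) with hKdef
  set M := E^2 - 1 with hMdef
  have hM0 : (0:ℝ) < M := by nlinarith
  have hlam' : lam * (1 + E) < -2 := by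
    rw [lt_div_iff₀ (by linarith : (0:ℝ) < 1 + E)] at hlam
    linarith
  have hlamneg : lam < 0 := by nlinarith
  have hK0 : (0:ℝ) < K := by nlinarith
  have hKM : 2 * E < K - M := by nlinarith
  -- the two key linear relations
  rw [hd0] at eP eQ
  rw [hbc1] at eP eQ
  have eq1 : 2 * E * u 1 = K * u 0 - M * g (u 0) := by
    rw [hKdef, hMdef]
    linear_combination E * eP - eQ
  have eq2 : 2 * E * u 0 = K * u 1 - M * g (u 1) := by
    rw [hKdef, hMdef]
    linear_combination E * eQ - eP
  -- absolute value estimates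
  have h1 : K * |u 0| ≤ 2 * E * |u 1| + M * |u 0| := by
    have heq : K * u 0 = 2 * E * u 1 + M * g (u 0) := by linarith
    calc K * |u 0| = |K * u 0| := by
            rw [abs_mul, abs_of_pos hK0]
      _ = |2 * E * u 1 + M * g (u 0)| := by rw [heq]
      _ ≤ |2 * E * u 1| + |M * g (u 0)| := abs_add_le _ _
      _ ≤ 2 * E * |u 1| + M * |u 0| := by
            have ha1 : |2 * E * u 1| = 2 * E * |u 1| := by
              rw [abs_mul, abs_of_pos (by linarith : (0:ℝ) < 2 * E)]
            have ha2 : |M * g (u 0)| = M * |g (u 0)| := by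
              rw [abs_mul, abs_of_pos hM0]
            rw [ha1, ha2]
            nlinarith [hga]
  have h2 : K * |u 1| ≤ 2 * E * |u 0| + M * |u 1| := by
    have heq : K * u 1 = 2 * E * u 0 + M * g (u 1) := by linarith
    calc K * |u 1| = |K * u 1| := by
            rw [abs_mul, abs_of_pos hK0]
      _ = |2 * E * u 0 + M * g (u 1)| := by rw [heq]
      _ ≤ |2 * E * u 0| + |M * g (u 1)| := abs_add_le _ _
      _ ≤ 2 * E * |u 0| + M * |u 1| := by
            have ha1 : |2 * E * u 0| = 2 * E * |u 0| := by
              rw [abs_mul, abs_of_pos (by linarith : (0:ℝ) < 2 * E)]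
            have ha2 : |M * g (u 1)| = M * |g (u 1)| := by
              rw [abs_mul, abs_of_pos hM0]
            rw [ha1, ha2]
            nlinarith [hgb]
  have hAB : |u 0| * |u 1| = 0 := by
    have hle : |u 0| * |u 1| ≤ 0 := by
      have hA := abs_nonneg (u 0)
      have hB := abs_nonneg (u 1)
      have m1 : (K - M) * |u 0| ≤ 2 * E * |u 1| := by linarith
      have m2 : (K - M) * |u 1| ≤ 2 * E * |u 0| := by linarith
      have hKM0 : (0:ℝ) ≤ K - M := by linarith
      have key : ((K - M) * |u 0|) * ((K - M) * |u 1|) ≤ (2 * E * |u 1|) * (2 * E * |u 0|) :=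
        mul_le_mul m1 m2 (mul_nonneg hKM0 hB) (by positivity)
      have hfac : 4 * E * E < (K - M) * (K - M) := by nlinarith
      nlinarith [key, hfac, mul_nonneg hA hB]
    have hge : 0 ≤ |u 0| * |u 1| := mul_nonneg (abs_nonneg _) (abs_nonneg _)
    linarith
  have hzero : u 0 = 0 ∧ u 1 = 0 := by
    rcases mul_eq_zero.mp hAB with h | h
    · have ha : u 0 = 0 := abs_eq_zero.mp h
      have : g (u 0) = 0 := by rw [ha, hg0]
      constructor
      · exact ha
      · have : 2 * E * u 1 = 0 := by rw [eq1, ha, hg0]; ring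
        have h2E : (2:ℝ) * E ≠ 0 := by positivity
        exact (mul_eq_zero.mp this).elim (fun h => absurd h h2E) id
    · have hb : u 1 = 0 := abs_eq_zero.mp h
      have : g (u 1) = 0 := by rw [hb, hg0]
      constructor
      · have : 2 * E * u 0 = 0 := by rw [eq2, hb, hg0]; ring
        have h2E : (2:ℝ) * E ≠ 0 := by positivity
        exact (mul_eq_zero.mp this).elim (fun h => absurd h h2E) id
      · exact hb
  obtain ⟨ha, hb⟩ := hzero
  have hd0' : deriv u 0 = 0 := by
    rw [ha] at hd0
    rw [hd0, hg0]; ring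
  intro x hx
  have hPx := hPconst x hx
  have hQx := hQconst x hx
  rw [ha, hd0'] at hPx hQx
  have hexp1 : Real.exp (-x) ≠ 0 := Real.exp_ne_zero _
  have hexp2 : Real.exp x ≠ 0 := Real.exp_ne_zero _
  have e1 : u x + deriv u x = 0 := by
    have hz : Real.exp (-x) * (u x + deriv u x) = 0 := by linarith
    rcases mul_eq_zero.mp hz with h | h
    · exact absurd h hexp1
    · exact h
  have e2 : deriv u x - u x = 0 := by
    have hz : Real.exp x * (deriv u x - u x) = 0 := by linarith
    rcases mul_eq_zero.mp hz with h | h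
    · exact absurd h hexp2
    · exact h
  linarith
end
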